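/- Let p be an odd prime and let r be a positive multiple of 3 with r ≥ 3. Define e₁, …, e_r by eᵢ = p−2 if i ≡ 2 (mod 3) and eᵢ = (p−1)/2 otherwise. Then the tuple (e₁,…,e_r) is numerically p-admissible. -/
import Mathlib


/-- The triangle inequality for a triple of naturals. -/
def Triangle (a b c : ℕ) : Prop := a ≤ b + c ∧ b ≤ a + c ∧ c ≤ a + b

/-- Numerical `p`-admissibility for an `r`-tuple `(e 1, …, e r)` with all `eᵢ < p`. -/
def NumericallyPAdmissible (p r : ℕ) (e : ℕ → ℕ) : Prop :=
  ∃ e' : ℕ → ℕ,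
    e' 1 = e 1 ∧ e' (r - 1) = e r ∧
    (∀ m, 2 ≤ m → m ≤ r - 2 → 0 < e' m ∧ ¬ p ∣ e' m) ∧
    (∀ m, 1 ≤ m → m < r - 1 →
      Triangle (e' m) (e (m + 1)) (e' (m + 1)) ∧
      Odd (e' m + e (m + 1) + e' (m + 1)) ∧
      e' m + e (m + 1) + e' (m + 1) < 2 * p)

/-- Example 4.4: for `p` an odd prime and `r ≥ 3` a multiple of 3, the tuple with
`eᵢ = p − 2` for `i ≡ 2 (mod 3)` and `eᵢ = (p−1)/2` otherwise is numerically
`p`-admissible. -/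
theorem example_tuple_admissible (p : ℕ) (hp : p.Prime) (hodd : Odd p)
    (r : ℕ) (hr : 3 ≤ r) (h3r : 3 ∣ r) (e : ℕ → ℕ)
    (he : ∀ i, 1 ≤ i → i ≤ r → e i = if i % 3 = 2 then p - 2 else (p - 1) / 2) :
    NumericallyPAdmissible p r e := by
  obtain ⟨k, hk⟩ := hodd
  have hp2 := hp.two_le
  have hk1 : 1 ≤ k := by omega
  have ha : (p - 1) / 2 = k := by omega
  obtain ⟨s, hs⟩ := h3r
  refine ⟨fun m => if m % 3 = 0 then 1 else k, ?_, ?_, ?_, ?_⟩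
  · rw [he 1 (by omega) (by omega)]
    norm_num [ha]
  · have h1 : (r - 1) % 3 = 2 := by omega
    have h2 : r % 3 = 0 := by omega
    rw [he r (by omega) (by omega)]
    simp [h1, h2, ha]
  · intro m _ _
    dsimp only
    constructor
    · split <;> omega
    · split
      · intro h
        have := Nat.le_of_dvd one_pos h
        omega
      · intro h
        have := Nat.le_of_dvd (by omega) h
        omega
  · intro m hm1 hm2
    rw [he (m + 1) (by omega) (by omega)]
    have h3 : m % 3 = 0 ∨ m % 3 = 1 ∨ m % 3 = 2 := by omega
    rcases h3 with h | h | h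
    · have A : (if m % 3 = 0 then (1:ℕ) else k) = 1 := if_pos h
      have B : (if (m + 1) % 3 = 0 then (1:ℕ) else k) = k := if_neg (by omega)
      have C : (if (m + 1) % 3 = 2 then p - 2 else (p - 1) / 2) = k := by
        rw [if_neg (by omega), ha]
      simp only [Triangle, A, B, C]
      exact ⟨⟨by omega, by omega, by omega⟩, ⟨k, by omega⟩, by omega⟩
    · have A : (if m % 3 = 0 then (1:ℕ) else k) = k := if_neg (by omega)
      have B : (if (m + 1) % 3 = 0 then (1:ℕ) else k) = k := if_neg (by omega)
      have C : (if (m + 1) % 3 = 2 then p - 2 else (p - 1) / 2) = p - 2 := if_pos (by omega)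
      simp only [Triangle, A, B, C]
      exact ⟨⟨by omega, by omega, by omega⟩, ⟨2 * k - 1, by omega⟩, by omega⟩
    · have A : (if m % 3 = 0 then (1:ℕ) else k) = k := if_neg (by omega)
      have B : (if (m + 1) % 3 = 0 then (1:ℕ) else k) = 1 := if_pos (by omega)
      have C : (if (m + 1) % 3 = 2 then p - 2 else (p - 1) / 2) = k := by
        rw [if_neg (by omega), ha]
      simp only [Triangle, A, B, C]
      exact ⟨⟨by omega, by omega, by omega⟩, ⟨k, by omega⟩, by omega⟩
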